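/- With the notation of the previous statement (P with first column w = (x₀,z), Q with top row y and remaining rows R, RR^T invertible, d² ≠ 0): 1 + w^T (QQ^T)^{-1} w = 1 + z^T (RR^T)^{-1} z + d^{-2} (x₀ - y R^T (RR^T)^{-1} z)². -/

import Mathlib

open Matrix

/-- `1 + wᵀ(QQᵀ)⁻¹w = 1 + zᵀ(RRᵀ)⁻¹z + d⁻²(x₀ - yRᵀ(RRᵀ)⁻¹z)²`, where `w = (x₀, z)`
and `Q` has first row `y` and remaining rows `R`. -/
theorem stmt5 (p k : ℕ) (x₀ : ℝ) (z : Fin p → ℝ) (y : Fin k → ℝ)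
    (R : Matrix (Fin p) (Fin k) ℝ) (hR : IsUnit (R * Rᵀ).det)
    (Q : Matrix (Fin 1 ⊕ Fin p) (Fin k) ℝ)
    (hQ : Q = Matrix.fromRows (Matrix.of fun (_ : Fin 1) j => y j) R)
    (d2 : ℝ) (hd2 : d2 = y ⬝ᵥ y - (R *ᵥ y) ⬝ᵥ ((R * Rᵀ)⁻¹ *ᵥ (R *ᵥ y)))
    (hd : d2 ≠ 0)
    (w : Fin 1 ⊕ Fin p → ℝ) (hw : w = Sum.elim (fun _ => x₀) z) :
    1 + w ⬝ᵥ ((Q * Qᵀ)⁻¹ *ᵥ w) =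
      1 + z ⬝ᵥ ((R * Rᵀ)⁻¹ *ᵥ z) +
        d2⁻¹ * (x₀ - (R *ᵥ y) ⬝ᵥ ((R * Rᵀ)⁻¹ *ᵥ z)) ^ 2 := by
  set E := R * Rᵀ with hEdef
  set v := R *ᵥ y with hv
  haveI hEinv : Invertible E := E.invertibleOfIsUnitDet hR
  set A : Matrix (Fin 1) (Fin 1) ℝ := Matrix.of fun _ _ => y ⬝ᵥ y with hA
  set B : Matrix (Fin 1) (Fin p) ℝ := Matrix.of fun _ j => v j with hB
  set C : Matrix (Fin p) (Fin 1) ℝ := Matrix.of fun i _ => v i with hC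
  have hblock : Q * Qᵀ = fromBlocks A B C E := by
    subst hQ
    ext i j
    cases i <;> cases j <;>
      simp [mul_apply, fromBlocks, hA, hB, hC, hEdef, hv, dotProduct, mulVec, mul_comm]
  have hiE : ⅟E = E⁻¹ := invOf_eq_nonsing_inv E
  have hS : A - B * ⅟E * C = Matrix.of fun _ _ => d2 := by
    ext i j
    simp [hA, hB, hC, hd2, hiE, mul_apply, dotProduct, mulVec, Finset.mul_sum,
      Finset.sum_mul, mul_assoc]
    rw [Finset.sum_comm]
  haveI hSinv : Invertible (A - B * ⅟E * C) := by
    refine (A - B * ⅟E * C).invertibleOfIsUnitDet ?_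
    rw [hS]
    simpa [Matrix.det_fin_one] using isUnit_iff_ne_zero.mpr hd
  haveI hQQ : Invertible (fromBlocks A B C E) := fromBlocks₂₂Invertible A B C E
  have hiS : ⅟(A - B * ⅟E * C) = Matrix.of fun _ _ => d2⁻¹ := by
    rw [invOf_eq_nonsing_inv, hS]
    refine inv_eq_right_inv ?_
    ext i j
    simp [mul_apply, Matrix.one_apply, Subsingleton.elim i j, mul_inv_cancel₀ hd]
  have hEsymm : E⁻¹ᵀ = E⁻¹ := by
    rw [Matrix.transpose_nonsing_inv]
    congr 1
    rw [hEdef, Matrix.transpose_mul, Matrix.transpose_transpose]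
  have hkey : ∀ u : Fin p → ℝ, z ⬝ᵥ (E⁻¹ *ᵥ u) = u ⬝ᵥ (E⁻¹ *ᵥ z) := by
    intro u
    rw [Matrix.dotProduct_mulVec, ← Matrix.mulVec_transpose, hEsymm, dotProduct_comm]
  have hinv : (Q * Qᵀ)⁻¹ = ⅟(fromBlocks A B C E) := by
    rw [hblock, ← invOf_eq_nonsing_inv]
  set b := v ⬝ᵥ (E⁻¹ *ᵥ z) with hb
  have h1 : ((Matrix.of fun _ _ => d2⁻¹ : Matrix (Fin 1) (Fin 1) ℝ) *ᵥ fun _ => x₀) =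
      fun _ => d2⁻¹ * x₀ := by
    ext i
    simp [mulVec, dotProduct]
  have h2 : (-((Matrix.of (fun _ _ => d2⁻¹) : Matrix (Fin 1) (Fin 1) ℝ) * B * E⁻¹) *ᵥ z) = fun _ : Fin 1 => -(d2⁻¹ * b) := by
    rw [Matrix.neg_mulVec,
      ← Matrix.mulVec_mulVec z ((Matrix.of fun _ _ => d2⁻¹ : Matrix (Fin 1) (Fin 1) ℝ) * B) E⁻¹,
      ← Matrix.mulVec_mulVec (E⁻¹ *ᵥ z) (Matrix.of fun _ _ => d2⁻¹ : Matrix (Fin 1) (Fin 1) ℝ) B]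
    ext i
    simp [hB, mulVec, dotProduct, hb, -Matrix.mulVec_mulVec]
  have h3 : (-(E⁻¹ * C * (Matrix.of fun _ _ => d2⁻¹ : Matrix (Fin 1) (Fin 1) ℝ)) *ᵥ fun _ : Fin 1 => x₀) =
      -((d2⁻¹ * x₀) • (E⁻¹ *ᵥ v)) := by
    rw [Matrix.neg_mulVec,
      ← Matrix.mulVec_mulVec (fun _ => x₀) (E⁻¹ * C) (Matrix.of fun _ _ => d2⁻¹ : Matrix (Fin 1) (Fin 1) ℝ),
      ← Matrix.mulVec_mulVec ((Matrix.of fun _ _ => d2⁻¹ : Matrix (Fin 1) (Fin 1) ℝ) *ᵥ fun _ => x₀) E⁻¹ C]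
    rw [h1]
    have : (C *ᵥ fun _ => d2⁻¹ * x₀) = (d2⁻¹ * x₀) • v := by
      ext i; simp [hC, mulVec, dotProduct, mul_comm]
    rw [this, Matrix.mulVec_smul]
  have h4 : ((E⁻¹ + E⁻¹ * C * (Matrix.of fun _ _ => d2⁻¹ : Matrix (Fin 1) (Fin 1) ℝ) * B * E⁻¹) *ᵥ z) =
      E⁻¹ *ᵥ z + (d2⁻¹ * b) • (E⁻¹ *ᵥ v) := by
    rw [Matrix.add_mulVec]
    congr 1
    rw [← Matrix.mulVec_mulVec z (E⁻¹ * C * (Matrix.of fun _ _ => d2⁻¹ : Matrix (Fin 1) (Fin 1) ℝ) * B) E⁻¹,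
      ← Matrix.mulVec_mulVec (E⁻¹ *ᵥ z) (E⁻¹ * C * (Matrix.of fun _ _ => d2⁻¹ : Matrix (Fin 1) (Fin 1) ℝ)) B,
      ← Matrix.mulVec_mulVec (B *ᵥ E⁻¹ *ᵥ z) (E⁻¹ * C) (Matrix.of fun _ _ => d2⁻¹ : Matrix (Fin 1) (Fin 1) ℝ),
      ← Matrix.mulVec_mulVec ((Matrix.of fun _ _ => d2⁻¹ : Matrix (Fin 1) (Fin 1) ℝ) *ᵥ B *ᵥ E⁻¹ *ᵥ z) E⁻¹ C]
    have hBz : (B *ᵥ (E⁻¹ *ᵥ z)) = fun _ : Fin 1 => b := by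
      ext i; simp [hB, mulVec, dotProduct, hb, -Matrix.mulVec_mulVec]
    rw [hBz]
    have hW : ((Matrix.of fun _ _ => d2⁻¹ : Matrix (Fin 1) (Fin 1) ℝ) *ᵥ fun _ => b) =
        fun _ => d2⁻¹ * b := by
      ext i; simp [mulVec, dotProduct]
    rw [hW]
    have : (C *ᵥ fun _ => d2⁻¹ * b) = (d2⁻¹ * b) • v := by
      ext i; simp [hC, mulVec, dotProduct, mul_comm]
    rw [this, Matrix.mulVec_smul]
  rw [hinv, invOf_fromBlocks₂₂_eq, hw, fromBlocks_mulVec, sumElim_dotProduct_sumElim, hiS, hiE]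
  simp only [Sum.elim_comp_inl, Sum.elim_comp_inr]
  rw [h1, h2, h3, h4]
  have hzv : z ⬝ᵥ (E⁻¹ *ᵥ v) = b := by rw [hkey v]
  have e1 : ∀ u u' : Fin 1 → ℝ, (fun _ : Fin 1 => x₀) ⬝ᵥ (u + u') = x₀ * (u 0 + u' 0) := by
    intro u u'; simp [dotProduct]
  rw [e1]
  simp only [dotProduct_add, dotProduct_neg, dotProduct_smul, smul_eq_mul,
    hzv]
  ring
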